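/- Let (Ω, Σ, ℙ) be a probability space, f ∈ L¹(Ω; ℙ), and let g, g₁, g₂, ... be real-valued random variables on Ω with gₙ → g in probability. Then liminf_{n→∞} ‖E[f | σ(gₙ)]‖₁ ≥ ‖E[f | σ(g)]‖₁. -/

import Mathlib

open MeasureTheory Filter Topology

private lemma clamp_abs_sub_le (a b : ℝ) (ha : -1 ≤ a) (ha' : a ≤ 1) :
    |a - max (-1) (min 1 b)| ≤ |a - b| := by
  have h1 := le_abs_self (a - b)
  have h2 := neg_abs_le (a - b)
  have h0 := abs_nonneg (a - b)
  rcases le_total b 1 with hb | hb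
  · rcases le_total (-1) b with hb' | hb'
    · rw [min_eq_right hb, max_eq_right hb']
    · rw [min_eq_right hb, max_eq_left hb']
      apply abs_le.mpr; constructor <;> linarith
  · rw [min_eq_left hb, max_eq_right (by norm_num : (-1:ℝ) ≤ 1)]
    apply abs_le.mpr; constructor <;> linarith

private lemma aux_int {Ω : Type*} {m0 : MeasurableSpace Ω} (μ : Measure Ω)
    [IsProbabilityMeasure μ] {f : Ω → ℝ} (hf : Integrable f μ)
    {X : Ω → ℝ} (hX : Measurable X) {ψ : ℝ → ℝ} (hψ : Continuous ψ)
    (hψ1 : ∀ y, |ψ y| ≤ 1) :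
    ∫ ω, ψ (X ω) * f ω ∂μ =
      ∫ ω, ψ (X ω) * (μ[f | MeasurableSpace.comap X Real.measurableSpace]) ω ∂μ := by
  set m := MeasurableSpace.comap X Real.measurableSpace with hm_def
  have hm : m ≤ m0 := hX.comap_le
  have hφm : StronglyMeasurable[m] (fun ω => ψ (X ω)) :=
    (hψ.measurable.comp (comap_measurable X)).stronglyMeasurable
  have hφ_sm0 : AEStronglyMeasurable[m0] (fun ω => ψ (X ω)) μ :=
    (hψ.measurable.comp hX).aestronglyMeasurable
  have hφf_int : Integrable ((fun ω => ψ (X ω)) * f) μ :=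
    hf.bdd_mul (c := 1) hφ_sm0 (Eventually.of_forall fun ω => by rw [Real.norm_eq_abs]; exact hψ1 _)
  have hpull := condExp_mul_of_stronglyMeasurable_left (μ := μ) hφm hφf_int hf
  calc ∫ ω, ψ (X ω) * f ω ∂μ = ∫ ω, ((fun ω => ψ (X ω)) * f) ω ∂μ := rfl
    _ = ∫ ω, (μ[(fun ω => ψ (X ω)) * f | m]) ω ∂μ := (integral_condExp hm).symm
    _ = ∫ ω, ((fun ω => ψ (X ω)) * μ[f | m]) ω ∂μ := integral_congr_ae hpull
    _ = ∫ ω, ψ (X ω) * (μ[f | m]) ω ∂μ := rfl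

theorem stmt5 {Ω : Type*} {m0 : MeasurableSpace Ω} (μ : Measure Ω) [IsProbabilityMeasure μ]
    (f : Ω → ℝ) (hf : Integrable f μ)
    (g : Ω → ℝ) (gs : ℕ → Ω → ℝ)
    (hg : Measurable g) (hgs : ∀ n, Measurable (gs n))
    (hconv : TendstoInMeasure μ gs atTop g) :
    ∫ ω, |(μ[f | MeasurableSpace.comap g Real.measurableSpace]) ω| ∂μ ≤
      atTop.liminf fun n =>
        ∫ ω, |(μ[f | MeasurableSpace.comap (gs n) Real.measurableSpace]) ω| ∂μ := by
  classical
  have hm : MeasurableSpace.comap g Real.measurableSpace ≤ m0 := hg.comap_le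
  set F := μ[f | MeasurableSpace.comap g Real.measurableSpace] with hF_def
  -- Doob–Dynkin factorization via condDistrib
  set H : ℝ → ℝ := fun b => ∫ y, y ∂(ProbabilityTheory.condDistrib f g μ b) with hH_def
  have hH_sm : StronglyMeasurable H := by
    apply MeasureTheory.StronglyMeasurable.integral_kernel_prod_right
      (κ := ProbabilityTheory.condDistrib f g μ) (f := fun _ y => y)
    exact measurable_snd.stronglyMeasurable
  have hH_meas : Measurable H := hH_sm.measurable
  have hFH : F =ᵐ[μ] fun ω => H (g ω) :=
    ProbabilityTheory.condExp_ae_eq_integral_condDistrib' hg hf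
  set ν := μ.map g with hν_def
  have hHg_int : Integrable (fun ω => H (g ω)) μ := (integrable_condExp : Integrable (μ[f|MeasurableSpace.comap g Real.measurableSpace]) μ).congr hFH
  have hH_int : Integrable H ν := by
    rw [hν_def, integrable_map_measure hH_sm.aestronglyMeasurable hg.aemeasurable]
    exact hHg_int
  -- sign function
  set s : ℝ → ℝ := fun y => if 0 ≤ H y then (1:ℝ) else -1 with hs_def
  have hs_meas : Measurable s :=
    Measurable.ite (measurableSet_le measurable_const hH_meas) measurable_const measurable_const
  have hs_abs : ∀ y, |s y| ≤ 1 := by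
    intro y; rw [hs_def]; dsimp only; split_ifs <;> norm_num
  have hsH : ∀ y, s y * H y = |H y| := by
    intro y; rw [hs_def]; dsimp only; split_ifs with h
    · rw [abs_of_nonneg h]; ring
    · rw [abs_of_neg (lt_of_not_ge h)]; ring
  -- the weighted measure
  set ρ := ν.withDensity (fun y => (‖H y‖₊ : ENNReal)) with hρ_def
  haveI : IsFiniteMeasure ρ := isFiniteMeasure_withDensity hH_int.2.ne
  have hs_int : Integrable s ρ := by
    refine ⟨hs_meas.aestronglyMeasurable, ?_⟩
    exact HasFiniteIntegral.of_bounded (C := 1)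
      (Eventually.of_forall fun y => by rw [Real.norm_eq_abs]; exact hs_abs y)
  -- first integral identity
  have EqA : ∫ ω, |F ω| ∂μ = ∫ y, |H y| ∂ν := by
    rw [hν_def, integral_map hg.aemeasurable hH_meas.abs.aestronglyMeasurable]
    exact integral_congr_ae (hFH.mono fun ω h => by simp [h])
  -- epsilon argument
  refine le_of_forall_pos_le_add fun ε hε => ?_
  obtain ⟨ψ₀, hψ₀_close, hψ₀_int⟩ := hs_int.exists_boundedContinuous_integral_sub_le hε
  set ψ : ℝ → ℝ := fun y => max (-1) (min 1 (ψ₀ y)) with hψ_def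
  have hψ_cont : Continuous ψ := continuous_const.max (continuous_const.min ψ₀.continuous)
  have hψ_abs : ∀ y, |ψ y| ≤ 1 := by
    intro y
    rw [abs_le]
    exact ⟨le_max_left _ _, max_le (by norm_num) (min_le_left _ _)⟩
  have hψs : ∀ y, |s y - ψ y| ≤ |s y - ψ₀ y| := by
    intro y
    have h1 : -1 ≤ s y := neg_le_of_abs_le (hs_abs y)
    have h2 : s y ≤ 1 := le_of_abs_le (hs_abs y)
    exact clamp_abs_sub_le (s y) (ψ₀ y) h1 h2
  -- key bound : ∫ |H| dν ≤ ∫ ψ * H dν + ε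
  have IntA : Integrable (fun y => |H y|) ν := hH_int.abs
  have IntB : Integrable (fun y => ψ y * H y) ν :=
    hH_int.bdd_mul (c := 1) hψ_cont.aestronglyMeasurable
      (Eventually.of_forall fun y => by rw [Real.norm_eq_abs]; exact hψ_abs y)
  have IntC : Integrable (fun y => |s y - ψ y| * |H y|) ν := by
    refine IntA.bdd_mul (c := 2) ((hs_meas.sub hψ_cont.measurable).abs.aestronglyMeasurable) (Eventually.of_forall fun y => ?_)
    rw [Real.norm_eq_abs, abs_abs]
    calc |s y - ψ y| ≤ |s y| + |ψ y| := abs_sub _ _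
      _ ≤ 2 := by linarith [hs_abs y, hψ_abs y]
  have KI : ∫ y, |H y| ∂ν ≤ (∫ y, ψ y * H y ∂ν) + ε := by
    have step1 : ∫ y, |H y| ∂ν - ∫ y, ψ y * H y ∂ν = ∫ y, (s y - ψ y) * H y ∂ν := by
      rw [← integral_sub IntA IntB]
      refine integral_congr_ae (Eventually.of_forall fun y => ?_)
      dsimp only; rw [← hsH y]; ring
    have step2 : ∫ y, (s y - ψ y) * H y ∂ν ≤ ∫ y, |s y - ψ y| * |H y| ∂ν := by
      refine integral_mono ((IntA.sub IntB).congr (Eventually.of_forall fun y => ?_)) IntC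
        fun y => ?_
      · simp only [Pi.sub_apply]; rw [← hsH y]; ring
      · calc (s y - ψ y) * H y ≤ |(s y - ψ y) * H y| := le_abs_self _
          _ = |s y - ψ y| * |H y| := abs_mul _ _
    have step3 : ∫ y, |s y - ψ y| * |H y| ∂ν = ∫ y, |s y - ψ y| ∂ρ := by
      rw [hρ_def, integral_withDensity_eq_integral_smul hH_meas.nnnorm]
      refine integral_congr_ae (Eventually.of_forall fun y => ?_)
      simp [NNReal.smul_def, Real.norm_eq_abs, mul_comm]
    have Int1 : Integrable (fun y => |s y - ψ y|) ρ := by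
      refine ⟨((hs_meas.sub hψ_cont.measurable).abs).aestronglyMeasurable, ?_⟩
      refine HasFiniteIntegral.of_bounded (C := 2) (Eventually.of_forall fun y => ?_)
      rw [Real.norm_eq_abs, abs_abs]
      calc |s y - ψ y| ≤ |s y| + |ψ y| := abs_sub _ _
        _ ≤ 2 := by linarith [hs_abs y, hψ_abs y]
    have Int2 : Integrable (fun y => |s y - ψ₀ y|) ρ := (hs_int.sub hψ₀_int).abs
    have step4 : ∫ y, |s y - ψ y| ∂ρ ≤ ε := by
      calc ∫ y, |s y - ψ y| ∂ρ ≤ ∫ y, |s y - ψ₀ y| ∂ρ := integral_mono Int1 Int2 hψs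
        _ ≤ ε := by simpa [Real.norm_eq_abs] using hψ₀_close
    linarith [step1, step2, step3 ▸ step4]
  -- relate ∫ ψ * H dν to b := ∫ ψ(g) f dμ
  set b := ∫ ω, ψ (g ω) * f ω ∂μ with hb_def
  have EqB : ∫ y, ψ y * H y ∂ν = b := by
    have e1 : ∫ y, ψ y * H y ∂ν = ∫ ω, ψ (g ω) * H (g ω) ∂μ := by
      rw [hν_def]
      exact integral_map hg.aemeasurable
        ((hψ_cont.measurable.stronglyMeasurable.mul hH_sm).aestronglyMeasurable)
    have e2 : ∫ ω, ψ (g ω) * H (g ω) ∂μ = ∫ ω, ψ (g ω) * F ω ∂μ :=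
      integral_congr_ae (hFH.mono fun ω h => by simp [h])
    rw [e1, e2, hb_def, aux_int μ hf hg hψ_cont hψ_abs]
  -- sequences
  set aseq : ℕ → ℝ := fun n =>
    ∫ ω, |(μ[f | MeasurableSpace.comap (gs n) Real.measurableSpace]) ω| ∂μ with ha_def
  set bseq : ℕ → ℝ := fun n => ∫ ω, ψ (gs n ω) * f ω ∂μ with hbseq_def
  have h5 : ∀ n, bseq n ≤ aseq n := by
    intro n
    rw [hbseq_def, ha_def]
    dsimp only
    rw [aux_int μ hf (hgs n) hψ_cont hψ_abs]
    set Fn := μ[f | MeasurableSpace.comap (gs n) Real.measurableSpace]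
    have hFn_int : Integrable Fn μ := integrable_condExp
    refine integral_mono
      (hFn_int.bdd_mul (c := 1) ((hψ_cont.measurable.comp (hgs n)).aestronglyMeasurable)
        (Eventually.of_forall fun ω => by rw [Real.norm_eq_abs]; exact hψ_abs _)) hFn_int.abs fun ω => ?_
    calc ψ (gs n ω) * Fn ω ≤ |ψ (gs n ω) * Fn ω| := le_abs_self _
      _ = |ψ (gs n ω)| * |Fn ω| := abs_mul _ _
      _ ≤ 1 * |Fn ω| := by
          exact mul_le_mul_of_nonneg_right (hψ_abs _) (abs_nonneg _)
      _ = |Fn ω| := one_mul _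
  -- bseq tends to b
  have hbtend : Tendsto bseq atTop (𝓝 b) := by
    refine tendsto_of_subseq_tendsto fun ns hns => ?_
    have hsub : TendstoInMeasure μ (fun n => gs (ns n)) atTop g :=
      fun δ hδ => (hconv δ hδ).comp hns
    obtain ⟨ms, -, hae⟩ := hsub.exists_seq_tendsto_ae
    refine ⟨ms, ?_⟩
    refine tendsto_integral_of_dominated_convergence (fun ω => |f ω|)
      (fun n => ((hψ_cont.measurable.comp (hgs (ns (ms n)))).aestronglyMeasurable).mul
        hf.aestronglyMeasurable)
      hf.abs (fun n => Eventually.of_forall fun ω => ?_) ?_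
    · rw [Real.norm_eq_abs, abs_mul]
      calc |ψ (gs (ns (ms n)) ω)| * |f ω| ≤ 1 * |f ω| :=
            mul_le_mul_of_nonneg_right (hψ_abs _) (abs_nonneg _)
        _ = |f ω| := one_mul _
    · filter_upwards [hae] with ω hω
      exact ((hψ_cont.tendsto _).comp hω).mul tendsto_const_nhds
  -- conclude via liminf
  have hb_le : b ≤ atTop.liminf aseq := by
    rw [← hbtend.liminf_eq]
    refine liminf_le_liminf (Eventually.of_forall h5) ?_ ?_
    · exact hbtend.isBoundedUnder_ge
    · exact isCoboundedUnder_ge_of_le atTop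
        (fun n => integral_abs_condExp_le (m := MeasurableSpace.comap (gs n) Real.measurableSpace) f)
  calc ∫ ω, |F ω| ∂μ = ∫ y, |H y| ∂ν := EqA
    _ ≤ (∫ y, ψ y * H y ∂ν) + ε := KI
    _ = b + ε := by rw [EqB]
    _ ≤ atTop.liminf aseq + ε := by linarith
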